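/- Let n ≥ 1, let M be an n×n complex matrix, and let D be the n×n diagonal matrix diag(1, 2, …, n). Then the set of complex numbers t for which the matrix (1−t)·M + t·D has a repeated eigenvalue (equivalently, for which its characteristic polynomial has a repeated complex root) is finite, and it has at most n(n−1) elements. -/

import Mathlib

open Polynomial Matrix

/-- Total-degree-≤ m predicate for elements of `ℂ[t][X]`. -/
def Bideg (m : ℕ) (f : Polynomial (Polynomial ℂ)) : Prop :=
  ∀ k j, m < k + j → (f.coeff k).coeff j = 0

lemma bideg_zero (m : ℕ) : Bideg m 0 := by intro k j _; simp

lemma bideg_add {m : ℕ} {f g} (hf : Bideg m f) (hg : Bideg m g) : Bideg m (f + g) := by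
  intro k j h; simp [hf k j h, hg k j h]

lemma bideg_neg {m : ℕ} {f} (hf : Bideg m f) : Bideg m (-f) := by
  intro k j h; simp [hf k j h]

lemma bideg_C {m : ℕ} {b : Polynomial ℂ} (hb : b.natDegree ≤ m) : Bideg m (C b) := by
  intro k j h
  rcases Nat.eq_zero_or_pos k with rfl | hk
  · simp only [coeff_C_zero]
    exact Polynomial.coeff_eq_zero_of_natDegree_lt (by omega)
  · simp [Polynomial.coeff_C, Nat.pos_iff_ne_zero.mp hk]

lemma bideg_X : Bideg 1 (X : Polynomial (Polynomial ℂ)) := by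
  intro k j h
  rcases eq_or_ne k 1 with rfl | hk
  · simp only [coeff_X_one]
    exact Polynomial.coeff_eq_zero_of_natDegree_lt (by simpa using h)
  · simp [Polynomial.coeff_X, hk, eq_comm]

lemma bideg_mul {a b : ℕ} {f g} (hf : Bideg a f) (hg : Bideg b g) : Bideg (a + b) (f * g) := by
  intro k j h
  rw [Polynomial.coeff_mul, Polynomial.finset_sum_coeff]
  refine Finset.sum_eq_zero fun uv huv => ?_
  rw [Polynomial.coeff_mul]
  refine Finset.sum_eq_zero fun cd hcd => ?_
  rw [Finset.HasAntidiagonal.mem_antidiagonal] at huv hcd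
  by_cases h1 : a < uv.1 + cd.1
  · rw [hf _ _ h1, zero_mul]
  · rw [hg _ _ (by omega), mul_zero]

lemma bideg_prod {m : ℕ} {s : Finset (Fin m)} {f : Fin m → Polynomial (Polynomial ℂ)} {d : ℕ}
    (hf : ∀ i ∈ s, Bideg d (f i)) : Bideg (s.card * d) (∏ i ∈ s, f i) := by
  classical
  induction s using Finset.cons_induction with
  | empty => simpa using bideg_C (m := 0) (b := 1) (by simp)
  | cons i s hi ih =>
      rw [Finset.prod_cons, Finset.card_cons, show (s.card + 1) * d = d + s.card * d by ring]
      exact bideg_mul (hf i (Finset.mem_cons_self i s))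
        (ih fun j hj => hf j (Finset.mem_cons_of_mem hj))

lemma bideg_sum {α : Type*} {m : ℕ} {s : Finset α} {f : α → Polynomial (Polynomial ℂ)}
    (hf : ∀ i ∈ s, Bideg m (f i)) : Bideg m (∑ i ∈ s, f i) := by
  classical
  induction s using Finset.cons_induction with
  | empty => simpa using bideg_zero m
  | cons i s hi ih =>
      rw [Finset.sum_cons]
      exact bideg_add (hf i (Finset.mem_cons_self i s))
        (ih fun j hj => hf j (Finset.mem_cons_of_mem hj))

lemma bideg_charpoly {n : ℕ} (B : Matrix (Fin n) (Fin n) (Polynomial ℂ))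
    (hB : ∀ i j, (B i j).natDegree ≤ 1) : Bideg n B.charpoly := by
  rw [Matrix.charpoly, Matrix.det_apply]
  refine bideg_sum fun σ _ => ?_
  have hent : ∀ i : Fin n, Bideg 1 (charmatrix B (σ i) i) := by
    intro i
    by_cases h : σ i = i
    · rw [h, charmatrix_apply_eq, sub_eq_add_neg]
      exact bideg_add bideg_X (bideg_neg (bideg_C (hB i i)))
    · rw [charmatrix_apply_ne _ _ _ h]
      exact bideg_neg (bideg_C (hB _ _))
  have hprod : Bideg n (∏ i, charmatrix B (σ i) i) := by
    have := bideg_prod (s := Finset.univ) fun i _ => hent i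
    simpa using this
  rcases Int.units_eq_one_or (Equiv.Perm.sign σ) with h1 | h1
  · simpa [h1] using hprod
  · simpa [h1] using bideg_neg hprod

lemma natDegree_pow_entry {n : ℕ} (B : Matrix (Fin n) (Fin n) (Polynomial ℂ))
    (hB : ∀ i j, (B i j).natDegree ≤ 1) (k : ℕ) :
    ∀ i j, ((B ^ k) i j).natDegree ≤ k := by
  induction k with
  | zero =>
      intro i j
      rw [pow_zero, Matrix.one_apply]
      split <;> simp
  | succ k ih =>
      intro i j
      rw [pow_succ, Matrix.mul_apply]
      refine Polynomial.natDegree_sum_le_of_forall_le _ _ fun l _ => ?_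
      exact (Polynomial.natDegree_mul_le).trans (add_le_add (ih i l) (hB l j))

lemma natDegree_det_aeval_le {n : ℕ} (hn : 1 ≤ n) (B : Matrix (Fin n) (Fin n) (Polynomial ℂ))
    (hB : ∀ i j, (B i j).natDegree ≤ 1) :
    ((Polynomial.aeval B (Polynomial.derivative B.charpoly)).det).natDegree ≤ n * (n - 1) := by
  have hp := bideg_charpoly B hB
  set q := Polynomial.derivative B.charpoly with hqdef
  have hq : ∀ k j, n - 1 < k + j → (q.coeff k).coeff j = 0 := by
    intro k j h
    rw [hqdef, Polynomial.coeff_derivative,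
      show ((k : Polynomial ℂ) + 1) = Polynomial.C ((k : ℂ) + 1) from by
        simp [Polynomial.C_eq_natCast],
      Polynomial.coeff_mul_C, hp (k + 1) j (by omega), zero_mul]
  have hqdeg : q.natDegree < n := by
    have : q.natDegree ≤ n - 1 := by
      rw [Polynomial.natDegree_le_iff_coeff_eq_zero]
      intro k hk
      ext j
      simpa using hq k j (by omega)
    omega
  have hE : ∀ i j, ((Polynomial.aeval B q) i j).natDegree ≤ n - 1 := by
    intro i j
    rw [Polynomial.aeval_eq_sum_range' hqdeg]
    rw [Matrix.sum_apply]
    refine Polynomial.natDegree_sum_le_of_forall_le _ _ fun k hk => ?_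
    rw [Finset.mem_range] at hk
    rw [Matrix.smul_apply, smul_eq_mul]
    refine Polynomial.natDegree_mul_le.trans ?_
    have h1 : (q.coeff k).natDegree ≤ n - 1 - k := by
      rw [Polynomial.natDegree_le_iff_coeff_eq_zero]
      intro j hj
      exact hq k j (by omega)
    have h2 := natDegree_pow_entry B hB k i j
    omega
  rw [Matrix.det_apply]
  refine Polynomial.natDegree_sum_le_of_forall_le _ _ fun σ _ => ?_
  have hprod : (∏ i, (Polynomial.aeval B q) (σ i) i).natDegree ≤ n * (n - 1) := by
    refine (Polynomial.natDegree_prod_le _ _).trans ?_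
    calc ∑ i, ((Polynomial.aeval B q) (σ i) i).natDegree ≤ ∑ _i : Fin n, (n - 1) :=
          Finset.sum_le_sum fun i _ => hE (σ i) i
      _ = n * (n - 1) := by simp [Finset.sum_const, mul_comm]
  rcases Int.units_eq_one_or (Equiv.Perm.sign σ) with h1 | h1
  · simpa [h1] using hprod
  · simpa [h1] using hprod

lemma det_sub_scalar {n : ℕ} (A : Matrix (Fin n) (Fin n) ℂ) (μ : ℂ) :
    (A - Matrix.scalar (Fin n) μ).det
      = (A.charpoly.roots.map fun lam => lam - μ).prod := by
  have hmon : A.charpoly.Monic := A.charpoly_monic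
  have hps : A.charpoly.Splits := IsAlgClosed.splits _
  have hdeg : A.charpoly.natDegree = n := by simp
  have hcard : Multiset.card A.charpoly.roots = n := by
    rw [Polynomial.splits_iff_card_roots.mp hps]; exact hdeg
  have heval : (Matrix.scalar (Fin n) μ - A).det = A.charpoly.eval μ := by
    have h1 : (Polynomial.evalRingHom μ) (Matrix.charpoly A)
        = ((charmatrix A).map (Polynomial.evalRingHom μ)).det := by
      rw [Matrix.charpoly, RingHom.map_det, RingHom.mapMatrix_apply]
    have h2 : (charmatrix A).map (Polynomial.evalRingHom μ) = Matrix.scalar (Fin n) μ - A := by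
      ext i j
      by_cases hij : i = j
      · subst hij
        simp [charmatrix_apply_eq, Matrix.scalar_apply, Matrix.sub_apply]
      · simp [charmatrix_apply_ne _ _ _ hij, Matrix.scalar_apply, Matrix.sub_apply,
          Matrix.diagonal_apply_ne _ hij]
    rw [← h2, ← h1]
    simp
  have hfac : A.charpoly = (A.charpoly.roots.map fun a => Polynomial.X - Polynomial.C a).prod :=
    hps.eq_prod_roots_of_monic hmon
  have heval2 : A.charpoly.eval μ = (A.charpoly.roots.map fun a => μ - a).prod := by
    conv_lhs => rw [hfac]
    rw [Polynomial.eval_multiset_prod, Multiset.map_map]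
    simp
  have hneg : A - Matrix.scalar (Fin n) μ = -(Matrix.scalar (Fin n) μ - A) := (neg_sub _ _).symm
  rw [hneg, Matrix.det_neg, heval, heval2]
  have : (A.charpoly.roots.map fun lam => lam - μ)
      = (A.charpoly.roots.map fun a => μ - a).map Neg.neg := by
    rw [Multiset.map_map]; congr 1; funext a; simp
  rw [this, Multiset.prod_map_neg]
  simp [hcard]

lemma det_aeval_eq_prod {n : ℕ} (A : Matrix (Fin n) (Fin n) ℂ) (q : Polynomial ℂ) :
    (Polynomial.aeval A q).det = (A.charpoly.roots.map fun z => q.eval z).prod := by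
  have hps : A.charpoly.Splits := IsAlgClosed.splits _
  have hdeg : A.charpoly.natDegree = n := by simp
  have hcard : Multiset.card A.charpoly.roots = n := by
    rw [Polynomial.splits_iff_card_roots.mp hps]; exact hdeg
  have hqs : q.Splits := IsAlgClosed.splits _
  set c := q.leadingCoeff with hc
  set L := q.roots.toList with hLdef
  have hL : (L : Multiset ℂ) = q.roots := Multiset.coe_toList _
  have hqfac : q = Polynomial.C c * (L.map fun a => Polynomial.X - Polynomial.C a).prod := by
    have := hqs.eq_prod_roots
    rwa [← hL, Multiset.map_coe, Multiset.prod_coe] at this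
  have haeval : Polynomial.aeval A q
      = Matrix.scalar (Fin n) c * (L.map fun μ => A - Matrix.scalar (Fin n) μ).prod := by
    conv_lhs => rw [hqfac]
    rw [_root_.map_mul, map_list_prod, List.map_map]
    congr 1
    · simp [Polynomial.aeval_C, Matrix.algebraMap_eq_diagonal, Matrix.scalar_apply]
    · congr 1
      refine List.map_congr_left fun μ _ => ?_
      simp [Function.comp_def, map_sub, Polynomial.aeval_C, Matrix.algebraMap_eq_diagonal,
        Matrix.scalar_apply]
  have hdetprod : ((L.map fun μ => A - Matrix.scalar (Fin n) μ).prod).det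
      = (L.map fun μ => (A.charpoly.roots.map fun lam => lam - μ).prod).prod := by
    have h := (Matrix.detMonoidHom (n := Fin n) (R := ℂ)).map_list_prod
      (L.map fun μ => A - Matrix.scalar (Fin n) μ)
    simp only [Matrix.coe_detMonoidHom] at h
    rw [h, List.map_map]
    congr 1
    refine List.map_congr_left fun μ _ => ?_
    simp only [Function.comp_apply]
    exact det_sub_scalar A μ
  have hscalar : (Matrix.scalar (Fin n) c).det = c ^ n := by
    simp [Matrix.scalar_apply, Matrix.det_diagonal]
  have hlist : ∀ g : ℂ → ℂ, (L.map g).prod = (q.roots.map g).prod := by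
    intro g
    rw [← hL, Multiset.map_coe, Multiset.prod_coe]
  rw [haeval, Matrix.det_mul, hdetprod, hscalar,
    hlist (fun μ => (A.charpoly.roots.map fun lam => lam - μ).prod),
    Multiset.prod_map_prod_map]
  have hrhs : ∀ z, q.eval z = c * (q.roots.map fun μ => z - μ).prod := by
    intro z
    conv_lhs => rw [hqfac]
    rw [Polynomial.eval_mul, Polynomial.eval_C, Polynomial.eval_list_prod, List.map_map]
    simp only [Function.comp_def, Polynomial.eval_sub, Polynomial.eval_X, Polynomial.eval_C]
    rw [hlist (fun μ => z - μ)]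
  calc c ^ n * (A.charpoly.roots.map fun lam => (q.roots.map fun μ => lam - μ).prod).prod
      = (A.charpoly.roots.map fun _ => c).prod
        * (A.charpoly.roots.map fun lam => (q.roots.map fun μ => lam - μ).prod).prod := by
        rw [Multiset.map_const', Multiset.prod_replicate, hcard]
    _ = (A.charpoly.roots.map fun lam => c * (q.roots.map fun μ => lam - μ).prod).prod := by
        rw [← Multiset.prod_map_mul]
    _ = (A.charpoly.roots.map fun z => q.eval z).prod := by
        congr 1
        exact Multiset.map_congr rfl fun z _ => (hrhs z).symm

lemma eval_det_aeval {n : ℕ} (B : Matrix (Fin n) (Fin n) (Polynomial ℂ)) (t : ℂ) :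
    ((Polynomial.aeval B (Polynomial.derivative B.charpoly)).det).eval t
      = (Polynomial.aeval (B.map (Polynomial.eval t))
          (Polynomial.derivative ((B.map (Polynomial.eval t)).charpoly))).det := by
  set φ := Polynomial.evalRingHom t with hφ
  set q := Polynomial.derivative B.charpoly with hq
  have h1 : ((Polynomial.aeval B q).det).eval t = ((Polynomial.aeval B q).map φ).det := by
    rw [show ((Polynomial.aeval B q).det).eval t = φ ((Polynomial.aeval B q).det) from rfl,
      RingHom.map_det, RingHom.mapMatrix_apply]
  have hcomp : (φ.mapMatrix : Matrix (Fin n) (Fin n) (Polynomial ℂ) →+* _).comp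
        (algebraMap (Polynomial ℂ) (Matrix (Fin n) (Fin n) (Polynomial ℂ)))
      = (algebraMap ℂ (Matrix (Fin n) (Fin n) ℂ)).comp φ := by
    refine RingHom.ext fun pl => ?_
    ext i j
    simp only [RingHom.comp_apply, RingHom.mapMatrix_apply, Matrix.algebraMap_eq_diagonal,
      Matrix.map_apply, Matrix.diagonal_apply, Pi.algebraMap_apply, Algebra.algebraMap_self, RingHom.id_apply]
    split_ifs <;> simp
  have h2 : (Polynomial.aeval B q).map φ = Polynomial.aeval (B.map φ) (q.map φ) := by
    rw [Polynomial.aeval_def, ← RingHom.mapMatrix_apply, Polynomial.hom_eval₂, hcomp,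
      RingHom.mapMatrix_apply, Polynomial.aeval_def, Polynomial.eval₂_map]
  have h3 : q.map φ = Polynomial.derivative ((B.map φ).charpoly) := by
    rw [hq, Matrix.charpoly_map, Polynomial.derivative_map]
  rw [h1, h2, h3]
  rfl

lemma squarefree_iff_no_common_root (p : Polynomial ℂ) :
    Squarefree p ↔ ∀ a : ℂ, p.eval a ≠ 0 ∨ (Polynomial.derivative p).eval a ≠ 0 := by
  rw [← PerfectField.separable_iff_squarefree, Polynomial.separable_def,
    Polynomial.isCoprime_iff_aeval_ne_zero_of_isAlgClosed (k := ℂ) ℂ p (Polynomial.derivative p)]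
  simp [Polynomial.coe_aeval_eq_eval]

theorem stmt_2 (n : ℕ) (hn : 1 ≤ n) (M : Matrix (Fin n) (Fin n) ℂ)
    (D : Matrix (Fin n) (Fin n) ℂ)
    (hD : D = Matrix.diagonal (fun i : Fin n => ((i : ℕ) + 1 : ℂ))) :
    {t : ℂ | ¬ Squarefree (Matrix.charpoly ((1 - t) • M + t • D))}.Finite ∧
      {t : ℂ | ¬ Squarefree (Matrix.charpoly ((1 - t) • M + t • D))}.ncard ≤ n * (n - 1) := by
  classical
  set B : Matrix (Fin n) (Fin n) (Polynomial ℂ) :=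
    ((1 - Polynomial.X : Polynomial ℂ)) • (M.map Polynomial.C)
      + (Polynomial.X : Polynomial ℂ) • (D.map Polynomial.C) with hB
  have hBent : ∀ i j, (B i j).natDegree ≤ 1 := by
    intro i j
    have hthis : B i j = ((1 - Polynomial.X : Polynomial ℂ)) * Polynomial.C (M i j)
        + Polynomial.X * Polynomial.C (D i j) := by
      rw [hB, Matrix.add_apply, Matrix.smul_apply, Matrix.smul_apply, Matrix.map_apply,
        Matrix.map_apply, smul_eq_mul, smul_eq_mul]
    rw [hthis]
    refine (Polynomial.natDegree_add_le _ _).trans ?_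
    have hx : ((1 - Polynomial.X : Polynomial ℂ)).natDegree ≤ 1 :=
      (Polynomial.natDegree_sub_le _ _).trans (by simp)
    have h1 : (((1 - Polynomial.X : Polynomial ℂ)) * Polynomial.C (M i j)).natDegree ≤ 1 :=
      Polynomial.natDegree_mul_le.trans (by simpa using hx)
    have h2 : (Polynomial.X * Polynomial.C (D i j)).natDegree ≤ 1 :=
      Polynomial.natDegree_mul_le.trans (by simp)
    omega
  have hBmap : ∀ t : ℂ, B.map (Polynomial.eval t) = (1 - t) • M + t • D := by
    intro t
    ext i j
    rw [Matrix.map_apply, hB, Matrix.add_apply, Matrix.smul_apply, Matrix.smul_apply,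
      Matrix.map_apply, Matrix.map_apply, smul_eq_mul, smul_eq_mul, Matrix.add_apply,
      Matrix.smul_apply, Matrix.smul_apply, smul_eq_mul, smul_eq_mul]
    simp only [Polynomial.eval_add, Polynomial.eval_mul, Polynomial.eval_sub,
      Polynomial.eval_one, Polynomial.eval_X, Polynomial.eval_C]
  set r : Polynomial ℂ := (Polynomial.aeval B (Polynomial.derivative B.charpoly)).det with hr
  have hrdeg : r.natDegree ≤ n * (n - 1) := natDegree_det_aeval_le hn B hBent
  have hreval : ∀ t : ℂ, r.eval t
      = ((Matrix.charpoly ((1 - t) • M + t • D)).roots.map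
          (fun z => (Polynomial.derivative (Matrix.charpoly ((1 - t) • M + t • D))).eval z)).prod := by
    intro t
    rw [hr, eval_det_aeval, hBmap t, det_aeval_eq_prod]
  have hzero : ∀ t : ℂ, ¬ Squarefree (Matrix.charpoly ((1 - t) • M + t • D)) → r.eval t = 0 := by
    intro t hsq
    set p := Matrix.charpoly ((1 - t) • M + t • D) with hp
    have hp0 : p ≠ 0 := (Matrix.charpoly_monic _).ne_zero
    rw [squarefree_iff_no_common_root] at hsq
    push_neg at hsq
    obtain ⟨a, ha1, ha2⟩ := hsq
    have haroot : a ∈ p.roots := by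
      rw [Polynomial.mem_roots hp0]
      exact ha1
    rw [hreval t]
    exact Multiset.prod_eq_zero (Multiset.mem_map.mpr ⟨a, haroot, ha2⟩)
  have hr1 : r.eval 1 ≠ 0 := by
    have hA1 : (1 - (1 : ℂ)) • M + (1 : ℂ) • D = D := by simp
    rw [hreval 1, hA1]
    have hcm : charmatrix D
        = Matrix.diagonal (fun i : Fin n => Polynomial.X - Polynomial.C ((i : ℕ) + 1 : ℂ)) := by
      ext i j
      by_cases h : i = j
      · subst h
        simp [charmatrix_apply_eq, hD]
      · simp [charmatrix_apply_ne _ _ _ h, hD, Matrix.diagonal_apply_ne _ h]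
    have hchar : D.charpoly
        = ∏ i : Fin n, (Polynomial.X - Polynomial.C ((i : ℕ) + 1 : ℂ)) := by
      rw [Matrix.charpoly, hcm, Matrix.det_diagonal]
    have hinj : Function.Injective (fun i : Fin n => ((i : ℕ) + 1 : ℂ)) := by
      intro i j hij
      simp only [add_left_inj, Nat.cast_inj] at hij
      exact Fin.val_injective hij
    have hsep : D.charpoly.Separable := by
      rw [hchar]
      exact Polynomial.separable_prod_X_sub_C_iff.mpr hinj
    have hsf : Squarefree D.charpoly := PerfectField.separable_iff_squarefree.mp hsep
    rw [squarefree_iff_no_common_root] at hsf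
    refine Multiset.prod_ne_zero fun hmem => ?_
    obtain ⟨z, hz, h0⟩ := Multiset.mem_map.mp hmem
    have hzr : D.charpoly.eval z = 0 := by
      exact (Polynomial.mem_roots ((Matrix.charpoly_monic _).ne_zero)).mp hz
    rcases hsf z with h | h
    · exact h hzr
    · exact h h0
  have hrne : r ≠ 0 := fun h => hr1 (by simp [h])
  have hsub : {t : ℂ | ¬ Squarefree (Matrix.charpoly ((1 - t) • M + t • D))}
      ⊆ (r.roots.toFinset : Set ℂ) := by
    intro t ht
    simp only [Set.mem_setOf_eq] at ht
    simp only [Finset.coe_sort_coe, Finset.mem_coe, Multiset.mem_toFinset,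
      Polynomial.mem_roots hrne]
    exact hzero t ht
  refine ⟨(r.roots.toFinset.finite_toSet).subset hsub, ?_⟩
  calc {t : ℂ | ¬ Squarefree (Matrix.charpoly ((1 - t) • M + t • D))}.ncard
      ≤ (r.roots.toFinset : Set ℂ).ncard :=
        Set.ncard_le_ncard hsub (r.roots.toFinset.finite_toSet)
    _ = r.roots.toFinset.card := Set.ncard_coe_finset _
    _ ≤ Multiset.card r.roots := r.roots.toFinset_card_le
    _ ≤ r.natDegree := r.card_roots'
    _ ≤ n * (n - 1) := hrdeg
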